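/- Let (M,H,g) be a sub-Riemannian manifold with metric-preserving complement V and ∇ = ∇^{g,V} with torsion T, curvature R, Ric(Z) = −tr_H R(×,Z)×, δ_H T(Z) = −tr_H(∇_×T)(×,Z). Then for every smooth f: L df(Z) − dLf(Z) = −2 tr_H ∇_× df(T(×,Z)) + df(Ric(Z) + δ_H T(Z)), and consequently ½L|df|²_{g*} = ⟨dLf, df⟩_{g*} + ⟨(Ric + δ_H T)*(df), df⟩_{g*} + |∇df|²_{g*⊗g*} − 2 tr_H ∇_× df(T(×, ♯df)). -/

import Mathlib

namespace Stmt14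

variable {C W : Type*} [CommRing C] [AddCommGroup W] [Module C W]


variable {C W : Type*} [CommRing C] [AddCommGroup W] [Module C W]

/-- Torsion `T(X,Y) = ∇_X Y − ∇_Y X − [X,Y]`. -/
def tor (β D : W → W → W) (X Y : W) : W := D X Y - D Y X - β X Y

/-- Curvature `R(X,Y)Z = ∇_X∇_Y Z − ∇_Y∇_X Z − ∇_{[X,Y]}Z`. -/
def curv (β D : W → W → W) (X Y Z : W) : W := D X (D Y Z) - D Y (D X Z) - D (β X Y) Z

/-- `(∇_Y df)(Z) = Y(Zf) − (∇_Y Z)f`. -/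
def cov1 (a : W → C → C) (D : W → W → W) (f : C) (Y Z : W) : C :=
  a Y (a Z f) - a (D Y Z) f

/-- `(∇²_{X,Y} df)(Z) = X((∇_Y df)(Z)) − (∇_Y df)(∇_X Z) − (∇_{∇_X Y} df)(Z)`. -/
def hess (a : W → C → C) (D : W → W → W) (f : C) (X Y Z : W) : C :=
  a X (cov1 a D f Y Z) - cov1 a D f Y (D X Z) - cov1 a D f (D X Y) Z

/-- The connection sub-Laplacian `L f = tr_H ∇²_{×,×} f` on functions. -/
def subLap (a : W → C → C) (D : W → W → W) {n : ℕ} (e : Fin n → W) (f : C) : C :=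
  ∑ i, (a (e i) (a (e i) f) - a (D (e i) (e i)) f)

/-- `Ric(Z) = − tr_H R(×,Z)×`. -/
def ric (β D : W → W → W) {n : ℕ} (e : Fin n → W) (Z : W) : W :=
  - ∑ i, curv β D (e i) Z (e i)

/-- `δ_H T(Z) = − tr_H (∇_× T)(×,Z)`. -/
def deltaT (β D : W → W → W) {n : ℕ} (e : Fin n → W) (Z : W) : W :=
  - ∑ i, (D (e i) (tor β D (e i) Z) - tor β D (D (e i) (e i)) Z
      - tor β D (e i) (D (e i) Z))

end Stmt14

open Stmt14

set_option maxHeartbeats 4000000 in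
/-- **Bochner–Weitzenböck formula for `∇ = ∇^{g,V}` with a metric-preserving
complement (Lemma 4.4).**
Algebraic model: `C` = functions, `W` = vector fields, `Hs`/`Vs` the horizontal
and vertical submodules with projection `prH`, `e` an orthonormal frame of
`Hs`, `∇ = ∇^{g,V}` encoded by: `H` parallel, compatibility `∇g = 0` on `H`
(in every direction, since `V` is metric preserving, so `q ≡ 0`),
`T(H,H) ⊆ V` and `T(H,V) = 0`.  Then
`L df(Z) − dLf(Z) = −2 tr_H ∇_× df(T(×,Z)) + df(Ric(Z) + δ_H T(Z))`, and
consequently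
`½L|df|²_{g*} = ⟨dLf,df⟩_{g*} + ⟨(Ric+δ_H T)^*(df),df⟩_{g*} + |∇df|²_{g*⊗g*}`
`  − 2 tr_H ∇_× df(T(×,♯df))`,
with `♯df = ∑ i (e_i f) e_i`, `|df|²_{g*} = ∑ i (e_i f)²`. -/
theorem stmt14 {C W : Type*} [CommRing C] [Algebra ℝ C] [AddCommGroup W] [Module C W]
    (a : W → C → C) (β : W → W → W) (D : W → W → W) (g : W → W → C)
    (ha_add₁ : ∀ X Y c, a (X + Y) c = a X c + a Y c)
    (ha_smul₁ : ∀ (f : C) X c, a (f • X) c = f * a X c)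
    (ha_add₂ : ∀ X c c', a X (c + c') = a X c + a X c')
    (ha_mul : ∀ X c c', a X (c * c') = a X c * c' + c * a X c')
    (hβ_anti : ∀ X Y, β X Y = - β Y X)
    (hβ_add₁ : ∀ X Y Z, β (X + Y) Z = β X Z + β Y Z)
    (hβ_leib : ∀ X (f : C) Y, β X (f • Y) = a X f • Y + f • β X Y)
    (hβ_act : ∀ X Y c, a (β X Y) c = a X (a Y c) - a Y (a X c))
    (hβ_jac : ∀ X Y Z, β X (β Y Z) + β Y (β Z X) + β Z (β X Y) = 0)
    (hD_add₁ : ∀ X Y Z, D (X + Y) Z = D X Z + D Y Z)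
    (hD_smul₁ : ∀ (f : C) X Y, D (f • X) Y = f • D X Y)
    (hD_add₂ : ∀ X Y Z, D X (Y + Z) = D X Y + D X Z)
    (hD_leib : ∀ X (f : C) Y, D X (f • Y) = a X f • Y + f • D X Y)
    (hg_symm : ∀ v w, g v w = g w v)
    (hg_addl : ∀ u v w, g (u + v) w = g u w + g v w)
    (hg_smull : ∀ (c : C) v w, g (c • v) w = c * g v w)
    (Hs : Submodule C W)
    (n : ℕ) (e : Fin n → W) (he : ∀ i, e i ∈ Hs)
    (horth : ∀ i j, g (e i) (e j) = if i = j then 1 else 0)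
    (hspan : ∀ w ∈ Hs, ∃ c : Fin n → C, w = ∑ i, c i • e i)
    (hpar : ∀ Z Y, Y ∈ Hs → D Z Y ∈ Hs)
    (Vs : Submodule C W) (prH : W →ₗ[C] W)
    (hprH_mem : ∀ x, prH x ∈ Hs) (hprH_id : ∀ x ∈ Hs, prH x = x)
    (hprH_ker : ∀ v ∈ Vs, prH v = 0) (hprV : ∀ x, x - prH x ∈ Vs)
    (hparV : ∀ Z Y, Y ∈ Vs → D Z Y ∈ Vs)
    -- `V` metric preserving: `∇` is compatible with `(H,g)` in all directions
    (hcompat : ∀ Z Y₁ Y₂, Y₁ ∈ Hs → Y₂ ∈ Hs →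
      a Z (g Y₁ Y₂) = g (D Z Y₁) Y₂ + g Y₁ (D Z Y₂))
    -- torsion properties of `∇^{g,V}`
    (htor_HH : ∀ X Y, X ∈ Hs → Y ∈ Hs → tor β D X Y ∈ Vs)
    (htor_HV : ∀ X Y, X ∈ Hs → Y ∈ Vs → tor β D X Y = 0)
    (f : C) (Z : W) :
    -- Weitzenböck formula
    ((∑ i, hess a D f (e i) (e i) Z) - a Z (subLap a D e f)
      = - (2 : C) * (∑ i, cov1 a D f (e i) (tor β D (e i) Z))
        + a (ric β D e Z + deltaT β D e Z) f) ∧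
    -- Bochner formula for `½ L |df|²`
    ((1 / 2 : ℝ) • subLap a D e (∑ i, a (e i) f * a (e i) f)
      = (∑ i, a (e i) (subLap a D e f) * a (e i) f)
        + a (ric β D e (∑ i, a (e i) f • e i)
            + deltaT β D e (∑ i, a (e i) f • e i)) f
        + (∑ i, ∑ j, cov1 a D f (e i) (e j) * cov1 a D f (e i) (e j))
        - (2 : C) * ∑ i, cov1 a D f (e i) (tor β D (e i) (∑ j, a (e j) f • e j))) := by

  classical
  -- ===== basic derived linearity lemmas =====
  have a1z : ∀ c : C, a 0 c = 0 := by
    intro c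
    have h := ha_add₁ 0 0 c
    simp only [add_zero] at h
    exact (right_eq_add.mp h)
  have a1n : ∀ (X : W) (c : C), a (-X) c = - a X c := by
    intro X c
    have h := ha_add₁ X (-X) c
    simp only [add_neg_cancel, a1z] at h
    exact eq_neg_of_add_eq_zero_right h.symm
  have a1s : ∀ (X Y : W) (c : C), a (X - Y) c = a X c - a Y c := by
    intro X Y c
    rw [sub_eq_add_neg, ha_add₁, a1n, sub_eq_add_neg]
  have a2z : ∀ X : W, a X (0:C) = 0 := by
    intro X
    have h := ha_add₂ X 0 0
    simp only [add_zero] at h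
    exact (right_eq_add.mp h)
  have a2n : ∀ (X : W) (c : C), a X (-c) = - a X c := by
    intro X c
    have h := ha_add₂ X c (-c)
    simp only [add_neg_cancel, a2z] at h
    exact eq_neg_of_add_eq_zero_right h.symm
  have a2s : ∀ (X : W) (c c' : C), a X (c - c') = a X c - a X c' := by
    intro X c c'
    rw [sub_eq_add_neg, ha_add₂, a2n, sub_eq_add_neg]
  have aone : ∀ X : W, a X (1:C) = 0 := by
    intro X
    have h := ha_mul X 1 1
    simp only [mul_one, one_mul] at h
    have h2 : a X 1 + a X 1 = a X 1 + 0 := by rw [add_zero]; exact h.symm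
    exact add_left_cancel h2
  have D1n : ∀ X Y : W, D (-X) Y = - D X Y := by
    intro X Y
    have h := hD_smul₁ (-1 : C) X Y
    rw [neg_one_smul, neg_one_smul] at h
    exact h
  have D1s : ∀ X X' Y : W, D (X - X') Y = D X Y - D X' Y := by
    intro X X' Y
    rw [sub_eq_add_neg, hD_add₁, D1n, sub_eq_add_neg]
  have aneg1 : ∀ X : W, a X (-1 : C) = 0 := by
    intro X; rw [a2n, aone, neg_zero]
  have D2n : ∀ X Y : W, D X (-Y) = - D X Y := by
    intro X Y
    have h := hD_leib X (-1 : C) Y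
    rw [neg_one_smul, aneg1, zero_smul, zero_add, neg_one_smul] at h
    exact h
  have D2s : ∀ X Y Y' : W, D X (Y - Y') = D X Y - D X Y' := by
    intro X Y Y'
    rw [sub_eq_add_neg, hD_add₂, D2n, sub_eq_add_neg]
  have b2add : ∀ X Y Y' : W, β X (Y + Y') = β X Y + β X Y' := by
    intro X Y Y'
    rw [hβ_anti, hβ_add₁, neg_add, ← hβ_anti, ← hβ_anti]
  -- sums
  have a1sum : ∀ (v : Fin n → W) (c : C), a (∑ i, v i) c = ∑ i, a (v i) c := by
    intro v c
    exact map_sum (AddMonoidHom.mk' (fun X => a X c) (fun X Y => ha_add₁ X Y c)) v Finset.univ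
  have a2sum : ∀ (X : W) (s : Fin n → C), a X (∑ i, s i) = ∑ i, a X (s i) := by
    intro X s
    exact map_sum (AddMonoidHom.mk' (fun c => a X c) (fun c c' => ha_add₂ X c c')) s Finset.univ
  have D1sum : ∀ (v : Fin n → W) (Y : W), D (∑ i, v i) Y = ∑ i, D (v i) Y := by
    intro v Y
    exact map_sum (AddMonoidHom.mk' (fun X => D X Y) (fun X X' => hD_add₁ X X' Y)) v Finset.univ
  have D2sum : ∀ (X : W) (v : Fin n → W), D X (∑ i, v i) = ∑ i, D X (v i) := by
    intro X v
    exact map_sum (AddMonoidHom.mk' (fun Y => D X Y) (fun Y Y' => hD_add₂ X Y Y')) v Finset.univ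
  have g1sum : ∀ (v : Fin n → W) (w : W), g (∑ i, v i) w = ∑ i, g (v i) w := by
    intro v w
    have gz : g 0 w = 0 := by
      have h := hg_addl 0 0 w
      simp only [add_zero] at h
      exact (right_eq_add.mp h)
    exact map_sum (AddMonoidHom.mk' (fun v => g v w) (fun v v' => hg_addl v v' w)) v Finset.univ
  -- halving, using the ℝ-algebra structure
  have half : ∀ s : C, s + s = 0 → s = 0 := by
    intro s hs
    have h2 : (2:ℝ) • s = 0 := by rw [two_smul]; exact hs
    calc s = ((1/2 : ℝ) * 2) • s := by norm_num
      _ = (1/2:ℝ) • ((2:ℝ) • s) := by rw [mul_smul]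
      _ = 0 := by rw [h2, smul_zero]
  have halfsum : ∀ s : C, (1/2 : ℝ) • (s + s) = s := by
    intro s
    rw [← two_smul ℝ s, ← mul_smul]
    norm_num
  -- antisymmetric double sums vanish
  have swaplem : ∀ (F : Fin n → Fin n → C), (∀ k l, F k l = - F l k) →
      (∑ k, ∑ l, F k l) = 0 := by
    intro F hF
    apply half
    have h1 : (∑ k, ∑ l, F k l) = ∑ k, ∑ l, F l k := Finset.sum_comm
    calc (∑ k, ∑ l, F k l) + (∑ k, ∑ l, F k l)
        = (∑ k, ∑ l, F k l) + (∑ k, ∑ l, F l k) := by rw [← h1]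
      _ = ∑ k, ∑ l, (F k l + F l k) := by
          rw [← Finset.sum_add_distrib]
          exact Finset.sum_congr rfl fun k _ => by rw [← Finset.sum_add_distrib]
      _ = ∑ k, ∑ l, (0:C) := by
          refine Finset.sum_congr rfl fun k _ => Finset.sum_congr rfl fun l _ => ?_
          rw [hF k l]; ring
      _ = 0 := by simp
  -- ===== frame lemmas =====
  have gsum : ∀ (c : Fin n → C) (j : Fin n), g (∑ i, c i • e i) (e j) = c j := by
    intro c j
    rw [g1sum]
    have : ∀ i, g (c i • e i) (e j) = if i = j then c i else 0 := by
      intro i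
      rw [hg_smull, horth]
      by_cases h : i = j <;> simp [h]
    rw [Finset.sum_congr rfl fun i _ => this i]
    simp
  have expandH : ∀ Y, Y ∈ Hs → (∑ j, g Y (e j) • e j) = Y := by
    intro Y hY
    rcases hspan Y hY with ⟨c, rfl⟩
    exact Finset.sum_congr rfl fun j _ => by rw [gsum]
  have gamanti : ∀ (X : W) (i j : Fin n),
      g (D X (e i)) (e j) = - g (D X (e j)) (e i) := by
    intro X i j
    have h := hcompat X (e i) (e j) (he i) (he j)
    rw [horth] at h
    have h0 : a X (if i = j then (1:C) else 0) = 0 := by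
      by_cases hij : i = j <;> simp [hij, aone, a2z]
    rw [h0] at h
    have := eq_neg_of_add_eq_zero_left h.symm
    rw [this, hg_symm]
  -- ===== torsion lemmas =====
  have tor_anti : ∀ X Y : W, tor β D X Y = - tor β D Y X := by
    intro X Y
    show D X Y - D Y X - β X Y = -(D Y X - D X Y - β Y X)
    rw [hβ_anti X Y]; abel
  have tor_add₂ : ∀ X Y Y' : W, tor β D X (Y + Y') = tor β D X Y + tor β D X Y' := by
    intro X Y Y'
    show D X (Y+Y') - D (Y+Y') X - β X (Y+Y') = _
    rw [hD_add₂, hD_add₁, b2add]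
    show _ = D X Y - D Y X - β X Y + (D X Y' - D Y' X - β X Y')
    abel
  have tor_in_V : ∀ (i : Fin n) (X : W), tor β D (e i) X ∈ Vs := by
    intro i X
    have hdec : X = prH X + (X - prH X) := by abel
    have : tor β D (e i) X
        = tor β D (e i) (prH X) + tor β D (e i) (X - prH X) := by
      conv_lhs => rw [hdec]
      rw [tor_add₂]
    rw [this, htor_HV (e i) (X - prH X) (he i) (hprV X), add_zero]
    exact htor_HH _ _ (he i) (hprH_mem X)
  have tor_tor : ∀ (i : Fin n) (X : W), tor β D (e i) (tor β D (e i) X) = 0 :=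
    fun i X => htor_HV _ _ (he i) (tor_in_V i X)
  -- symmetry defect of cov1 is the torsion
  have cov1_tor : ∀ X Y : W, cov1 a D f X Y - cov1 a D f Y X = - a (tor β D X Y) f := by
    intro X Y
    show (a X (a Y f) - a (D X Y) f) - (a Y (a X f) - a (D Y X) f)
        = - a (D X Y - D Y X - β X Y) f
    rw [a1s, a1s, hβ_act]
    ring
  have cov1_swap_tor : ∀ (i : Fin n) (X : W),
      cov1 a D f (tor β D (e i) X) (e i) = cov1 a D f (e i) (tor β D (e i) X) := by
    intro i X
    have h := cov1_tor (tor β D (e i) X) (e i)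
    have hz : tor β D (tor β D (e i) X) (e i) = 0 := by
      rw [tor_anti, tor_tor, neg_zero]
    rw [hz, a1z, neg_zero, sub_eq_zero] at h
    exact h
  -- ===== per-index pure identities =====
  have key1 : ∀ X Zc : W,
      hess a D f X X Zc - a Zc (cov1 a D f X X)
        + cov1 a D f X (D Zc X) + cov1 a D f (D Zc X) X
      = -(cov1 a D f X (tor β D X Zc)) - cov1 a D f (tor β D X Zc) X
        - a (curv β D X Zc X) f
        - a (D X (tor β D X Zc)) f + a (tor β D (D X X) Zc) f
        + a (tor β D X (D X Zc)) f := by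
    intro X Zc
    simp only [hess, cov1, tor, curv, D1s, D2s, a1s, a2s, hβ_act]
    ring
  have key2 : ∀ X K : W,
      hess a D f X X K - (a X (a X (a K f)) - a (D X X) (a K f))
      = -(2:C) * a X (a (D X K) f) + a (D X (D X K)) f + a (D (D X X) K) f := by
    intro X K
    simp only [hess, cov1, a2s]
    ring
  -- ===== linearity of cov1 and hess =====
  have cov1_add1 : ∀ V V' Y : W, cov1 a D f (V + V') Y = cov1 a D f V Y + cov1 a D f V' Y := by
    intro V V' Y
    simp only [cov1, ha_add₁, hD_add₁]
    ring
  have cov1_smul1 : ∀ (c : C) (V Y : W), cov1 a D f (c • V) Y = c * cov1 a D f V Y := by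
    intro c V Y
    simp only [cov1, ha_smul₁, hD_smul₁]
    ring
  have cov1_add2 : ∀ Y V V' : W, cov1 a D f Y (V + V') = cov1 a D f Y V + cov1 a D f Y V' := by
    intro Y V V'
    simp only [cov1, ha_add₁, ha_add₂, hD_add₂]
    ring
  have cov1_smul2 : ∀ (Y : W) (c : C) (V : W), cov1 a D f Y (c • V) = c * cov1 a D f Y V := by
    intro Y c V
    simp only [cov1, ha_smul₁, hD_leib, ha_add₁, ha_mul]
    ring
  have cov1_sum1 : ∀ (c : Fin n → C) (Y : W),
      cov1 a D f (∑ j, c j • e j) Y = ∑ j, c j * cov1 a D f (e j) Y := by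
    intro c Y
    calc cov1 a D f (∑ j, c j • e j) Y = ∑ j, cov1 a D f (c j • e j) Y :=
          map_sum (AddMonoidHom.mk' (fun V => cov1 a D f V Y) (fun V V' => cov1_add1 V V' Y))
            _ Finset.univ
      _ = ∑ j, c j * cov1 a D f (e j) Y :=
          Finset.sum_congr rfl fun j _ => cov1_smul1 _ _ _
  have cov1_sum2 : ∀ (Y : W) (c : Fin n → C),
      cov1 a D f Y (∑ j, c j • e j) = ∑ j, c j * cov1 a D f Y (e j) := by
    intro Y c
    calc cov1 a D f Y (∑ j, c j • e j) = ∑ j, cov1 a D f Y (c j • e j) :=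
          map_sum (AddMonoidHom.mk' (fun V => cov1 a D f Y V) (fun V V' => cov1_add2 Y V V'))
            _ Finset.univ
      _ = ∑ j, c j * cov1 a D f Y (e j) :=
          Finset.sum_congr rfl fun j _ => cov1_smul2 _ _ _
  have hess_add3 : ∀ X Y V V' : W,
      hess a D f X Y (V + V') = hess a D f X Y V + hess a D f X Y V' := by
    intro X Y V V'
    simp only [hess, cov1_add2, hD_add₂, ha_add₂]
    ring
  have hess_smul3 : ∀ (X Y : W) (c : C) (V : W),
      hess a D f X Y (c • V) = c * hess a D f X Y V := by
    intro X Y c V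
    simp only [hess, cov1_smul2, hD_leib, cov1_add2, ha_mul]
    ring
  have hess_sum3 : ∀ (X Y : W) (c : Fin n → C),
      hess a D f X Y (∑ j, c j • e j) = ∑ j, c j * hess a D f X Y (e j) := by
    intro X Y c
    calc hess a D f X Y (∑ j, c j • e j) = ∑ j, hess a D f X Y (c j • e j) :=
          map_sum (AddMonoidHom.mk' (fun V => hess a D f X Y V) (fun V V' => hess_add3 X Y V V'))
            _ Finset.univ
      _ = ∑ j, c j * hess a D f X Y (e j) :=
          Finset.sum_congr rfl fun j _ => hess_smul3 _ _ _ _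
  -- ===== step 1 : the trace-swap term vanishes =====
  have step1 : ∀ X : W,
      (∑ i, (cov1 a D f (e i) (D X (e i)) + cov1 a D f (D X (e i)) (e i))) = 0 := by
    intro X
    have hDe : ∀ i : Fin n, D X (e i) = ∑ j, g (D X (e i)) (e j) • e j :=
      fun i => (expandH _ (hpar X (e i) (he i))).symm
    have h1 : ∀ i : Fin n, cov1 a D f (e i) (D X (e i)) + cov1 a D f (D X (e i)) (e i)
        = ∑ j, g (D X (e i)) (e j) *
            (cov1 a D f (e i) (e j) + cov1 a D f (e j) (e i)) := by
      intro i
      conv_lhs => rw [hDe i]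
      rw [cov1_sum2, cov1_sum1, ← Finset.sum_add_distrib]
      exact Finset.sum_congr rfl fun j _ => by ring
    rw [Finset.sum_congr rfl fun i _ => h1 i]
    apply swaplem
    intro k l
    rw [gamanti X k l]
    ring
  -- ===== formula 1 (for arbitrary direction) =====
  have hsubLap : subLap a D e f = ∑ i, cov1 a D f (e i) (e i) := rfl
  have formula1 : ∀ Zc : W,
      (∑ i, hess a D f (e i) (e i) Zc) - a Zc (subLap a D e f)
      = -(2:C) * (∑ i, cov1 a D f (e i) (tor β D (e i) Zc))
        + a (ric β D e Zc + deltaT β D e Zc) f := by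
    intro Zc
    have hric : a (ric β D e Zc) f = -∑ i, a (curv β D (e i) Zc (e i)) f := by
      show a (-∑ i, curv β D (e i) Zc (e i)) f = _
      rw [a1n, a1sum]
    have hdel : a (deltaT β D e Zc) f
        = -∑ i, (a (D (e i) (tor β D (e i) Zc)) f
            - a (tor β D (D (e i) (e i)) Zc) f
            - a (tor β D (e i) (D (e i) Zc)) f) := by
      show a (-∑ i, (D (e i) (tor β D (e i) Zc) - tor β D (D (e i) (e i)) Zc
          - tor β D (e i) (D (e i) Zc))) f = _
      rw [a1n, a1sum]
      congr 1
      exact Finset.sum_congr rfl fun i _ => by rw [a1s, a1s]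
    calc (∑ i, hess a D f (e i) (e i) Zc) - a Zc (subLap a D e f)
        = ∑ i, (hess a D f (e i) (e i) Zc - a Zc (cov1 a D f (e i) (e i))) := by
          rw [hsubLap, a2sum, ← Finset.sum_sub_distrib]
      _ = ∑ i, ((hess a D f (e i) (e i) Zc - a Zc (cov1 a D f (e i) (e i)))
            + (cov1 a D f (e i) (D Zc (e i)) + cov1 a D f (D Zc (e i)) (e i))) := by
          rw [Finset.sum_add_distrib, step1 Zc, add_zero]
      _ = ∑ i, (-(cov1 a D f (e i) (tor β D (e i) Zc))
            - cov1 a D f (tor β D (e i) Zc) (e i)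
            - a (curv β D (e i) Zc (e i)) f
            - a (D (e i) (tor β D (e i) Zc)) f
            + a (tor β D (D (e i) (e i)) Zc) f
            + a (tor β D (e i) (D (e i) Zc)) f) := by
          refine Finset.sum_congr rfl fun i _ => ?_
          have h := key1 (e i) Zc
          calc hess a D f (e i) (e i) Zc - a Zc (cov1 a D f (e i) (e i))
              + (cov1 a D f (e i) (D Zc (e i)) + cov1 a D f (D Zc (e i)) (e i))
              = hess a D f (e i) (e i) Zc - a Zc (cov1 a D f (e i) (e i))
                + cov1 a D f (e i) (D Zc (e i)) + cov1 a D f (D Zc (e i)) (e i) := by ring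
            _ = _ := h
      _ = ∑ i, (-(2:C) * cov1 a D f (e i) (tor β D (e i) Zc)
            + (- a (curv β D (e i) Zc (e i)) f)
            + (-(a (D (e i) (tor β D (e i) Zc)) f
                - a (tor β D (D (e i) (e i)) Zc) f
                - a (tor β D (e i) (D (e i) Zc)) f))) := by
          refine Finset.sum_congr rfl fun i _ => ?_
          rw [cov1_swap_tor i Zc]
          ring
      _ = -(2:C) * (∑ i, cov1 a D f (e i) (tor β D (e i) Zc))
          + a (ric β D e Zc + deltaT β D e Zc) f := by
          rw [Finset.sum_add_distrib, Finset.sum_add_distrib, ha_add₁, hric, hdel,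
            Finset.mul_sum, Finset.sum_neg_distrib, Finset.sum_neg_distrib, add_assoc]
  -- ===== Bochner machinery =====
  have hw : ∀ (l k : Fin n), a (D (e l) (e k)) f
      = ∑ m, g (D (e l) (e k)) (e m) * a (e m) f := by
    intro l k
    conv_lhs => rw [← expandH (D (e l) (e k)) (hpar _ _ (he k))]
    rw [a1sum]
    exact Finset.sum_congr rfl fun m _ => ha_smul₁ _ _ _
  have Z0 : ∀ l : Fin n, ∑ k, a (e k) f * a (D (e l) (e k)) f = 0 := by
    intro l
    calc ∑ k, a (e k) f * a (D (e l) (e k)) f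
        = ∑ k, ∑ m, g (D (e l) (e k)) (e m) * (a (e k) f * a (e m) f) := by
          refine Finset.sum_congr rfl fun k _ => ?_
          rw [hw l k, Finset.mul_sum]
          exact Finset.sum_congr rfl fun m _ => by ring
      _ = 0 := by
          apply swaplem
          intro k m
          rw [gamanti (e l) k m]
          ring
  have h2 : ∀ j k : Fin n, a (e j) (a (D (e j) (e k)) f)
      = ∑ l, (a (e j) (g (D (e j) (e k)) (e l)) * a (e l) f
          + g (D (e j) (e k)) (e l) * a (e j) (a (e l) f)) := by
    intro j k
    rw [hw j k, a2sum]
    exact Finset.sum_congr rfl fun l _ => ha_mul _ _ _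
  have h3 : ∀ j k : Fin n, a (D (e j) (D (e j) (e k))) f
      = ∑ l, (a (e j) (g (D (e j) (e k)) (e l)) * a (e l) f
          + g (D (e j) (e k)) (e l) * a (D (e j) (e l)) f) := by
    intro j k
    have hD2 : D (e j) (D (e j) (e k))
        = ∑ l, (a (e j) (g (D (e j) (e k)) (e l)) • e l
            + g (D (e j) (e k)) (e l) • D (e j) (e l)) := by
      conv_lhs => rw [← expandH (D (e j) (e k)) (hpar _ _ (he k))]
      rw [D2sum]
      exact Finset.sum_congr rfl fun l _ => hD_leib _ _ _
    rw [hD2, a1sum]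
    refine Finset.sum_congr rfl fun l _ => ?_
    rw [ha_add₁, ha_smul₁, ha_smul₁]
  have h4 : ∀ j k : Fin n, a (D (D (e j) (e j)) (e k)) f
      = ∑ l, g (D (e j) (e j)) (e l) * a (D (e l) (e k)) f := by
    intro j k
    have hD1 : D (D (e j) (e j)) (e k) = ∑ l, g (D (e j) (e j)) (e l) • D (e l) (e k) := by
      conv_lhs => rw [← expandH (D (e j) (e j)) (hpar _ _ (he j))]
      rw [D1sum]
      exact Finset.sum_congr rfl fun l _ => hD_smul₁ _ _ _
    rw [hD1, a1sum]
    exact Finset.sum_congr rfl fun l _ => ha_smul₁ _ _ _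
  have claim4bj : ∀ j : Fin n,
      (∑ i, a (e j) (a (e i) f) * a (e j) (a (e i) f))
      = (∑ i, cov1 a D f (e j) (e i) * cov1 a D f (e j) (e i))
        + ∑ k, a (e k) f * (-(2:C) * a (e j) (a (D (e j) (e k)) f)
            + a (D (e j) (D (e j) (e k))) f + a (D (D (e j) (e j)) (e k)) f) := by
    intro j
    rw [← sub_eq_iff_eq_add']
    rw [← Finset.sum_sub_distrib]
    have hL : ∀ i, a (e j) (a (e i) f) * a (e j) (a (e i) f)
        - cov1 a D f (e j) (e i) * cov1 a D f (e j) (e i)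
        = ∑ l, g (D (e j) (e i)) (e l) *
            ((2 * a (e j) (a (e i) f) - a (D (e j) (e i)) f) * a (e l) f) := by
      intro i
      have hcov : cov1 a D f (e j) (e i) = a (e j) (a (e i) f) - a (D (e j) (e i)) f := rfl
      calc a (e j) (a (e i) f) * a (e j) (a (e i) f)
          - cov1 a D f (e j) (e i) * cov1 a D f (e j) (e i)
          = (2 * a (e j) (a (e i) f) - a (D (e j) (e i)) f) * a (D (e j) (e i)) f := by
            rw [hcov]; ring
        _ = ∑ l, g (D (e j) (e i)) (e l) *
            ((2 * a (e j) (a (e i) f) - a (D (e j) (e i)) f) * a (e l) f) := by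
            nth_rewrite 2 [hw j i]
            rw [Finset.mul_sum]
            exact Finset.sum_congr rfl fun l _ => by ring
    have hR : ∀ k, a (e k) f * (-(2:C) * a (e j) (a (D (e j) (e k)) f)
          + a (D (e j) (D (e j) (e k))) f + a (D (D (e j) (e j)) (e k)) f)
        = ∑ l, a (e k) f * (-(2:C) * (a (e j) (g (D (e j) (e k)) (e l)) * a (e l) f
                + g (D (e j) (e k)) (e l) * a (e j) (a (e l) f))
            + (a (e j) (g (D (e j) (e k)) (e l)) * a (e l) f
                + g (D (e j) (e k)) (e l) * a (D (e j) (e l)) f)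
            + g (D (e j) (e j)) (e l) * a (D (e l) (e k)) f) := by
      intro k
      rw [h2 j k, h3 j k, h4 j k, Finset.mul_sum, ← Finset.sum_add_distrib,
        ← Finset.sum_add_distrib, Finset.mul_sum]
    rw [Finset.sum_congr rfl fun i _ => hL i, Finset.sum_congr rfl fun k _ => hR k]
    rw [← sub_eq_zero, ← Finset.sum_sub_distrib]
    calc ∑ k, ((∑ l, g (D (e j) (e k)) (e l) *
            ((2 * a (e j) (a (e k) f) - a (D (e j) (e k)) f) * a (e l) f))
          - ∑ l, a (e k) f * (-(2:C) * (a (e j) (g (D (e j) (e k)) (e l)) * a (e l) f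
                + g (D (e j) (e k)) (e l) * a (e j) (a (e l) f))
            + (a (e j) (g (D (e j) (e k)) (e l)) * a (e l) f
                + g (D (e j) (e k)) (e l) * a (D (e j) (e l)) f)
            + g (D (e j) (e j)) (e l) * a (D (e l) (e k)) f))
        = ∑ k, ∑ l, ((2 * a (e j) (a (e k) f) * g (D (e j) (e k)) (e l) * a (e l) f
            - g (D (e j) (e k)) (e l) * a (e l) f * a (D (e j) (e k)) f
            + a (e k) f * a (e l) f * a (e j) (g (D (e j) (e k)) (e l))
            + 2 * a (e k) f * g (D (e j) (e k)) (e l) * a (e j) (a (e l) f)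
            - a (e k) f * g (D (e j) (e k)) (e l) * a (D (e j) (e l)) f)
            + (-(a (e k) f * (g (D (e j) (e j)) (e l) * a (D (e l) (e k)) f)))) := by
          refine Finset.sum_congr rfl fun k _ => ?_
          rw [← Finset.sum_sub_distrib]
          exact Finset.sum_congr rfl fun l _ => by ring
      _ = (∑ k, ∑ l, (2 * a (e j) (a (e k) f) * g (D (e j) (e k)) (e l) * a (e l) f
            - g (D (e j) (e k)) (e l) * a (e l) f * a (D (e j) (e k)) f
            + a (e k) f * a (e l) f * a (e j) (g (D (e j) (e k)) (e l))
            + 2 * a (e k) f * g (D (e j) (e k)) (e l) * a (e j) (a (e l) f)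
            - a (e k) f * g (D (e j) (e k)) (e l) * a (D (e j) (e l)) f))
          + (∑ k, ∑ l, (-(a (e k) f * (g (D (e j) (e j)) (e l) * a (D (e l) (e k)) f)))) := by
          rw [← Finset.sum_add_distrib]
          exact Finset.sum_congr rfl fun k _ => by rw [← Finset.sum_add_distrib]
      _ = 0 := by
          have hF : (∑ k, ∑ l, (2 * a (e j) (a (e k) f) * g (D (e j) (e k)) (e l) * a (e l) f
              - g (D (e j) (e k)) (e l) * a (e l) f * a (D (e j) (e k)) f
              + a (e k) f * a (e l) f * a (e j) (g (D (e j) (e k)) (e l))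
              + 2 * a (e k) f * g (D (e j) (e k)) (e l) * a (e j) (a (e l) f)
              - a (e k) f * g (D (e j) (e k)) (e l) * a (D (e j) (e l)) f)) = 0 := by
            apply swaplem
            intro k l
            rw [gamanti (e j) k l, a2n]
            ring
          have hP4 : (∑ k, ∑ l, (-(a (e k) f * (g (D (e j) (e j)) (e l)
              * a (D (e l) (e k)) f)))) = 0 := by
            rw [Finset.sum_comm]
            refine Finset.sum_eq_zero fun l _ => ?_
            calc ∑ k, (-(a (e k) f * (g (D (e j) (e j)) (e l) * a (D (e l) (e k)) f)))
                = ∑ k, (-(g (D (e j) (e j)) (e l)) * (a (e k) f * a (D (e l) (e k)) f)) := by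
                  exact Finset.sum_congr rfl fun k _ => by ring
              _ = (-(g (D (e j) (e j)) (e l))) * ∑ k, (a (e k) f * a (D (e l) (e k)) f) := by
                  rw [Finset.mul_sum]
              _ = 0 := by rw [Z0 l, mul_zero]
          rw [hF, hP4, add_zero]
  -- ===== step 4a : Leibniz expansion of the Laplacian of |df|² =====
  have hX : ∀ X : W, a X (∑ i, a (e i) f * a (e i) f)
      = ∑ i, (a X (a (e i) f) * a (e i) f + a (e i) f * a X (a (e i) f)) := by
    intro X
    rw [a2sum]
    exact Finset.sum_congr rfl fun i _ => ha_mul X _ _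
  have step4a : subLap a D e (∑ i, a (e i) f * a (e i) f)
      = (∑ j, ∑ i, (a (e j) (a (e i) f) * a (e j) (a (e i) f)
          + a (e i) f * (a (e j) (a (e j) (a (e i) f)) - a (D (e j) (e j)) (a (e i) f))))
        + (∑ j, ∑ i, (a (e j) (a (e i) f) * a (e j) (a (e i) f)
          + a (e i) f * (a (e j) (a (e j) (a (e i) f)) - a (D (e j) (e j)) (a (e i) f)))) := by
    show (∑ j, (a (e j) (a (e j) (∑ i, a (e i) f * a (e i) f))
        - a (D (e j) (e j)) (∑ i, a (e i) f * a (e i) f))) = _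
    rw [← Finset.sum_add_distrib]
    refine Finset.sum_congr rfl fun j _ => ?_
    rw [hX (e j), hX (D (e j) (e j)), a2sum, ← Finset.sum_sub_distrib,
      ← Finset.sum_add_distrib]
    refine Finset.sum_congr rfl fun i _ => ?_
    rw [ha_add₂, ha_mul, ha_mul]
    ring
  -- ===== main assembly for the Bochner formula =====
  have ha_sharp : a (∑ k, a (e k) f • e k) (subLap a D e f)
      = ∑ i, a (e i) (subLap a D e f) * a (e i) f := by
    rw [a1sum]
    exact Finset.sum_congr rfl fun k _ => by rw [ha_smul₁]; ring
  have main : (1 / 2 : ℝ) • subLap a D e (∑ i, a (e i) f * a (e i) f)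
      = (∑ j, hess a D f (e j) (e j) (∑ k, a (e k) f • e k))
        + ∑ i, ∑ j, cov1 a D f (e i) (e j) * cov1 a D f (e i) (e j) := by
    calc (1 / 2 : ℝ) • subLap a D e (∑ i, a (e i) f * a (e i) f)
        = ∑ j, ∑ i, (a (e j) (a (e i) f) * a (e j) (a (e i) f)
            + a (e i) f * (a (e j) (a (e j) (a (e i) f)) - a (D (e j) (e j)) (a (e i) f))) := by
          rw [step4a, halfsum]
      _ = (∑ j, ∑ i, a (e j) (a (e i) f) * a (e j) (a (e i) f))
          + ∑ j, ∑ i, a (e i) f * (a (e j) (a (e j) (a (e i) f))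
              - a (D (e j) (e j)) (a (e i) f)) := by
          rw [← Finset.sum_add_distrib]
          exact Finset.sum_congr rfl fun j _ => by rw [← Finset.sum_add_distrib]
      _ = ((∑ j, ∑ i, cov1 a D f (e j) (e i) * cov1 a D f (e j) (e i))
            + ∑ j, ∑ k, a (e k) f * (-(2:C) * a (e j) (a (D (e j) (e k)) f)
                + a (D (e j) (D (e j) (e k))) f + a (D (D (e j) (e j)) (e k)) f))
          + ∑ j, ∑ i, a (e i) f * (a (e j) (a (e j) (a (e i) f))
              - a (D (e j) (e j)) (a (e i) f)) := by
          congr 1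
          rw [← Finset.sum_add_distrib]
          exact Finset.sum_congr rfl fun j _ => claim4bj j
      _ = (∑ j, ∑ k, a (e k) f * hess a D f (e j) (e j) (e k))
          + ∑ j, ∑ i, cov1 a D f (e j) (e i) * cov1 a D f (e j) (e i) := by
          rw [add_assoc, add_comm (∑ j, ∑ i, cov1 a D f (e j) (e i) * cov1 a D f (e j) (e i))]
          congr 1
          rw [← Finset.sum_add_distrib]
          refine Finset.sum_congr rfl fun j _ => ?_
          rw [← Finset.sum_add_distrib]
          refine Finset.sum_congr rfl fun k _ => ?_
          have hk := key2 (e j) (e k)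
          linear_combination (-(a (e k) f)) * hk
      _ = (∑ j, hess a D f (e j) (e j) (∑ k, a (e k) f • e k))
          + ∑ i, ∑ j, cov1 a D f (e i) (e j) * cov1 a D f (e i) (e j) := by
          congr 1
          refine Finset.sum_congr rfl fun j _ => ?_
          rw [hess_sum3 (e j) (e j) (fun k => a (e k) f)]
  refine ⟨formula1 Z, ?_⟩
  have f1 := formula1 (∑ k, a (e k) f • e k)
  rw [main]
  linear_combination f1 + ha_sharp
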